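/- Let V be an F_2-vector space of finite dimension n ≥ 2 with basis e_1, …, e_n, let e_0 = e_1 + ⋯ + e_n, and set ξ_e = (n+1)·1 + Σ_{i=0}^n X^{e_i} ∈ F_2[V] (where n+1 is reduced mod 2). Then ξ_e ∈ I²[V] and Pf_2(ξ_e) = n − 1, i.e., ξ_e can be written as a sum of n − 1 two-fold Pfister elements (1 + X^u)(1 + X^v) but not fewer. -/

import Mathlib

/-- The augmentation map ε₀ on the group algebra F₂[V]. -/
noncomputable def eps0 (V : Type*) [AddCommGroup V] [Module (ZMod 2) V] :
    AddMonoidAlgebra (ZMod 2) V →ₐ[ZMod 2] ZMod 2 :=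
  AddMonoidAlgebra.lift (ZMod 2) (ZMod 2) V 1

/-- The augmentation ideal I[V] ⊆ F₂[V]. -/
noncomputable def augIdeal (V : Type*) [AddCommGroup V] [Module (ZMod 2) V] :
    Ideal (AddMonoidAlgebra (ZMod 2) V) :=
  RingHom.ker (eps0 V).toRingHom

/-- The map ε₁ : F₂[V] → V, Σ αᵥ Xᵛ ↦ Σ αᵥ v. -/
noncomputable def eps1 (V : Type*) [AddCommGroup V] [Module (ZMod 2) V] :
    AddMonoidAlgebra (ZMod 2) V →+ V :=
  (Finsupp.liftAddHom fun v => (smulAddHom (ZMod 2) V).flip v).comp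
    AddMonoidAlgebra.coeffAddEquiv.toAddMonoidHom

/-- 1-fold Pfister elements 1 + Xᵛ. -/
def IsPfister1 {V : Type*} [AddCommGroup V] [Module (ZMod 2) V]
    (x : AddMonoidAlgebra (ZMod 2) V) : Prop :=
  ∃ v : V, x = 1 + AddMonoidAlgebra.single v 1

/-- 2-fold Pfister elements (1 + Xᵘ)(1 + Xᵛ). -/
def IsPfister2 {V : Type*} [AddCommGroup V] [Module (ZMod 2) V]
    (x : AddMonoidAlgebra (ZMod 2) V) : Prop :=
  ∃ u v : V, x = (1 + AddMonoidAlgebra.single u 1) * (1 + AddMonoidAlgebra.single v 1)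

/-- m-fold Pfister elements (1 + X^{v₁})⋯(1 + X^{v_m}). -/
def IsPfister {V : Type*} [AddCommGroup V] [Module (ZMod 2) V] (m : ℕ)
    (x : AddMonoidAlgebra (ZMod 2) V) : Prop :=
  ∃ v : Fin m → V, x = ∏ i, (1 + AddMonoidAlgebra.single (v i) 1)

/-- The m-Pfister number: least number of m-fold Pfister elements summing to x. -/
noncomputable def PfNum {V : Type*} [AddCommGroup V] [Module (ZMod 2) V] (m : ℕ)
    (x : AddMonoidAlgebra (ZMod 2) V) : ℕ :=
  sInf {r | ∃ f : Fin r → AddMonoidAlgebra (ZMod 2) V,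
    (∀ i, IsPfister m (f i)) ∧ x = ∑ i, f i}
section PfisterAux

variable {V : Type*} [AddCommGroup V] [Module (ZMod 2) V]

lemma vadd_self (v : V) : v + v = 0 := by
  have h := two_smul (ZMod 2) v
  rwa [show (2 : ZMod 2) = 0 by decide, zero_smul, eq_comm] at h

lemma xadd_self (x : AddMonoidAlgebra (ZMod 2) V) : x + x = 0 := by
  have h := two_smul (ZMod 2) x
  rwa [show (2 : ZMod 2) = 0 by decide, zero_smul, eq_comm] at h

lemma pf2_expand (u v : V) :
    (1 + AddMonoidAlgebra.single u (1 : ZMod 2)) * (1 + AddMonoidAlgebra.single v 1)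
      = 1 + AddMonoidAlgebra.single u 1 + AddMonoidAlgebra.single v 1
          + AddMonoidAlgebra.single (u + v) 1 := by
  have h : AddMonoidAlgebra.single u (1 : ZMod 2) * AddMonoidAlgebra.single v 1
      = AddMonoidAlgebra.single (u + v) 1 := by
    rw [AddMonoidAlgebra.single_mul_single, one_mul]
  rw [← h]; ring

lemma single_zero_one : (AddMonoidAlgebra.single (0:V) (1:ZMod 2)) = 1 :=
  AddMonoidAlgebra.one_def.symm

lemma pf2_degen {u v : V} (h : u = 0 ∨ v = 0 ∨ u + v = 0) :
    (1 + AddMonoidAlgebra.single u (1 : ZMod 2)) * (1 + AddMonoidAlgebra.single v 1) = 0 := by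
  rw [pf2_expand]
  rcases h with rfl | rfl | h
  · rw [single_zero_one, zero_add]
    linear_combination xadd_self (1 : AddMonoidAlgebra (ZMod 2) V)
      + xadd_self (AddMonoidAlgebra.single v 1)
  · rw [single_zero_one, add_zero]
    linear_combination xadd_self (1 : AddMonoidAlgebra (ZMod 2) V)
      + xadd_self (AddMonoidAlgebra.single u 1)
  · have hv : v = u := by
      have h1 : -u = v := neg_eq_of_add_eq_zero_right h
      have h2 : -u = u := neg_eq_of_add_eq_zero_right (vadd_self u)
      rw [← h1, h2]
    rw [h, hv, single_zero_one]
    linear_combination xadd_self (1 : AddMonoidAlgebra (ZMod 2) V)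
      + xadd_self (AddMonoidAlgebra.single u 1)

lemma natCast_eq (k : ℕ) : ((k : ℕ) : AddMonoidAlgebra (ZMod 2) V)
    = AddMonoidAlgebra.single 0 (k : ZMod 2) := by
  induction k with
  | zero => simp
  | succ k ih =>
    push_cast
    rw [ih, ← single_zero_one, ← AddMonoidAlgebra.single_add]

lemma coeff_add (x y : AddMonoidAlgebra (ZMod 2) V) (w : V) : (x + y).coeff w = x.coeff w + y.coeff w :=
  Finsupp.add_apply x.coeff y.coeff w

lemma coeff_sum {κ : Type*} (s : Finset κ) (f : κ → AddMonoidAlgebra (ZMod 2) V) (w : V) :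
    (∑ i ∈ s, f i).coeff w = ∑ i ∈ s, (f i).coeff w := by
  rw [AddMonoidAlgebra.coeff_sum]; exact Finsupp.finset_sum_apply _ _ w

lemma coeff_single (a : V) (b : ZMod 2) (w : V) [Decidable (a = w)] :
    (AddMonoidAlgebra.single a b).coeff w = if a = w then b else 0 := by
  rw [AddMonoidAlgebra.coeff_single]; exact Finsupp.single_apply

noncomputable def xiF (n : ℕ) (e : Fin n → V) : AddMonoidAlgebra (ZMod 2) V :=
  ((n + 1 : ℕ) : AddMonoidAlgebra (ZMod 2) V)
    + AddMonoidAlgebra.single (∑ i, e i) 1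
    + ∑ i, AddMonoidAlgebra.single (e i) 1

lemma xi_lower {ι : Type} [DecidableEq ι] :
    ∀ (n : ℕ) (e : Fin n → V), LinearIndependent (ZMod 2) e →
      ∀ (s : Finset ι) (f : ι → AddMonoidAlgebra (ZMod 2) V),
        (∀ i ∈ s, IsPfister2 (f i)) → xiF n e = ∑ i ∈ s, f i → n - 1 ≤ s.card := by
  intro n
  induction n with
  | zero => intro _ _ _ _ _ _; omega
  | succ n ih =>
    intro e he s f hf hsum
    rcases Nat.eq_zero_or_pos n with rfl | hn
    · omega
    have hinj : Function.Injective e := he.injective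
    have hw0 : e (Fin.last n) ≠ 0 := he.ne_zero (Fin.last n)
    -- the sum of all e i is not e (last n)
    have hsumne : (∑ i, e i) ≠ e (Fin.last n) := by
      intro hc
      rw [Fin.sum_univ_castSucc] at hc
      have h0 : (∑ i : Fin n, e i.castSucc) = 0 := by
        have := add_right_cancel (b := e (Fin.last n)) (a := ∑ i : Fin n, e i.castSucc)
          (c := 0)
        apply this
        rw [hc, zero_add]
      have hind : LinearIndependent (ZMod 2) (fun i : Fin n => e i.castSucc) :=
        he.comp _ (Fin.castSucc_injective n)
      have := Fintype.linearIndependent_iff.mp hind (fun _ => 1) (by simpa using h0) ⟨0, hn⟩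
      exact one_ne_zero this
    -- coefficient of xi at w is 1
    have hxiw : (xiF (n+1) e).coeff (e (Fin.last n)) = 1 := by
      classical
      simp only [xiF, natCast_eq, coeff_add, coeff_sum]
      rw [coeff_single, coeff_single,
        if_neg (fun h => hw0 h.symm), if_neg hsumne]
      have hco : ∀ i : Fin (n+1),
          (AddMonoidAlgebra.single (e i) (1:ZMod 2)).coeff (e (Fin.last n))
            = if i = Fin.last n then 1 else 0 := by
        intro i
        rw [coeff_single]
        exact if_congr hinj.eq_iff rfl rfl
      rw [Finset.sum_congr rfl (fun i _ => hco i), Finset.sum_ite_eq' Finset.univ,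
        if_pos (Finset.mem_univ _)]
      simp
    classical
    -- find an index whose Pfister element covers e (last n)
    rw [hsum, coeff_sum] at hxiw
    have hex : ∃ i ∈ s, (f i).coeff (e (Fin.last n)) ≠ 0 := by
      by_contra hc
      push_neg at hc
      rw [Finset.sum_eq_zero hc] at hxiw
      exact one_ne_zero hxiw.symm
    obtain ⟨i₀, hi₀s, hi₀⟩ := hex
    obtain ⟨u, v, huv⟩ := hf i₀ hi₀s
    have hw : e (Fin.last n) = u ∨ e (Fin.last n) = v ∨ e (Fin.last n) = u + v := by
      by_contra hc
      push_neg at hc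
      obtain ⟨h1, h2, h3⟩ := hc
      apply hi₀
      rw [huv, pf2_expand, ← single_zero_one, coeff_add, coeff_add, coeff_add,
        coeff_single, coeff_single, coeff_single, coeff_single,
        if_neg (fun h => hw0 h.symm), if_neg (fun h => h1 h.symm),
        if_neg (fun h => h2 h.symm), if_neg (fun h => h3 h.symm)]
      simp
    -- construct the retraction φ killing e (last n) and fixing the other basis vectors
    have hker : LinearMap.ker (Finsupp.linearCombination (ZMod 2) e) = ⊥ :=
      linearIndependent_iff_ker.mp he
    obtain ⟨g, hg⟩ := LinearMap.exists_leftInverse_of_injective _ hker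
    have hge : ∀ i, g (e i) = Finsupp.single i 1 := by
      intro i
      have h1 : e i = Finsupp.linearCombination (ZMod 2) e (Finsupp.single i 1) := by
        rw [Finsupp.linearCombination_single, one_smul]
      rw [h1, ← LinearMap.comp_apply, hg, LinearMap.id_apply]
    set φ : V →ₗ[ZMod 2] V :=
      LinearMap.id + (LinearMap.toSpanSingleton (ZMod 2) V (e (Fin.last n))).comp
        ((Finsupp.lapply (Fin.last n)).comp g) with hφdef
    have hφ : ∀ x : V, φ x = x + (g x) (Fin.last n) • e (Fin.last n) := by
      intro x
      simp [hφdef, LinearMap.toSpanSingleton_apply]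
    have hφlast : φ (e (Fin.last n)) = 0 := by
      rw [hφ, hge, Finsupp.single_apply, if_pos rfl, one_smul]
      exact vadd_self _
    have hφcs : ∀ i : Fin n, φ (e i.castSucc) = e i.castSucc := by
      intro i
      rw [hφ, hge, Finsupp.single_apply,
        if_neg (Fin.ne_of_lt (Fin.castSucc_lt_last i)), zero_smul, add_zero]
    -- the induced algebra map
    set Φ := AddMonoidAlgebra.mapDomainAlgHom (ZMod 2) (ZMod 2) φ.toAddMonoidHom with hΦdef
    have hΦs : ∀ x : V, Φ (AddMonoidAlgebra.single x 1) = AddMonoidAlgebra.single (φ x) 1 := by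
      intro x
      simp [hΦdef, Finsupp.mapDomain_single]
    have hΦ1 : ∀ x : V, Φ (1 + AddMonoidAlgebra.single x 1)
        = 1 + AddMonoidAlgebra.single (φ x) 1 := by
      intro x
      rw [map_add, map_one, hΦs]
    -- Φ maps xi (n+1) to xi n
    have hΦxi : Φ (xiF (n+1) e) = xiF n (fun i : Fin n => e i.castSucc) := by
      have h1 : φ (∑ i, e i) = ∑ i : Fin n, e i.castSucc := by
        rw [map_sum, Fin.sum_univ_castSucc]
        rw [hφlast, add_zero]
        exact Finset.sum_congr rfl fun i _ => hφcs i
      have h2 : Φ (xiF (n+1) e)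
          = ((n + 1 + 1 : ℕ) : AddMonoidAlgebra (ZMod 2) V)
            + AddMonoidAlgebra.single (φ (∑ i, e i)) 1
            + ∑ i : Fin (n+1), AddMonoidAlgebra.single (φ (e i)) 1 := by
        rw [xiF, map_add, map_add, map_natCast, hΦs]
        congr 1
        rw [map_sum]
        exact Finset.sum_congr rfl fun i _ => hΦs (e i)
      rw [h2, h1, Fin.sum_univ_castSucc (f := fun i => AddMonoidAlgebra.single (φ (e i)) 1),
        hφlast, single_zero_one]
      have h3 : (∑ i : Fin n, AddMonoidAlgebra.single (φ (e i.castSucc)) (1 : ZMod 2))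
          = ∑ i : Fin n, AddMonoidAlgebra.single (e i.castSucc) (1 : ZMod 2) :=
        Finset.sum_congr rfl fun i _ => by rw [hφcs i]
      rw [h3, xiF]
      push_cast
      linear_combination xadd_self (1 : AddMonoidAlgebra (ZMod 2) V)
    -- Φ kills the Pfister element at i₀
    have hΦf0 : Φ (f i₀) = 0 := by
      rw [huv, map_mul, hΦ1, hΦ1]
      apply pf2_degen
      rcases hw with h | h | h
      · exact Or.inl (by rw [← h, hφlast])
      · exact Or.inr (Or.inl (by rw [← h, hφlast]))
      · exact Or.inr (Or.inr (by rw [← map_add, ← h, hφlast]))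
    -- apply the induction hypothesis
    have hxi' : xiF n (fun i : Fin n => e i.castSucc) = ∑ i ∈ s.erase i₀, Φ (f i) := by
      rw [← hΦxi, hsum, map_sum, ← Finset.add_sum_erase _ _ hi₀s, hΦf0, zero_add]
    have hind : LinearIndependent (ZMod 2) (fun i : Fin n => e i.castSucc) :=
      he.comp _ (Fin.castSucc_injective n)
    have hIH := ih (fun i : Fin n => e i.castSucc) hind (s.erase i₀) (fun i => Φ (f i))
      (fun i hi => by
        obtain ⟨a, b, hab⟩ := hf i (Finset.mem_of_mem_erase hi)
        exact ⟨φ a, φ b, by show Φ (f i) = _; rw [hab, map_mul, hΦ1, hΦ1]⟩) hxi'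
    have hc1 : 1 ≤ s.card := Finset.card_pos.mpr ⟨i₀, hi₀s⟩
    rw [Finset.card_erase_of_mem hi₀s] at hIH
    omega

lemma xi_upper (m : ℕ) (e : Fin (m + 1) → V) :
    ∃ f : Fin m → AddMonoidAlgebra (ZMod 2) V,
      (∀ j, IsPfister2 (f j)) ∧ xiF (m + 1) e = ∑ j, f j := by
  induction m with
  | zero =>
    refine ⟨Fin.elim0, fun j => j.elim0, ?_⟩
    simp only [xiF, Fin.sum_univ_succ, Finset.univ_eq_empty, Finset.sum_empty, add_zero]
    push_cast
    linear_combination xadd_self (1 : AddMonoidAlgebra (ZMod 2) V)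
      + xadd_self (AddMonoidAlgebra.single (e 0) 1)
  | succ m ih =>
    obtain ⟨f, hf, hsum⟩ := ih (fun i => e i.castSucc)
    refine ⟨Fin.snoc f ((1 + AddMonoidAlgebra.single (∑ i : Fin (m+1), e i.castSucc) 1)
        * (1 + AddMonoidAlgebra.single (e (Fin.last (m+1))) 1)), ?_, ?_⟩
    · intro j
      refine Fin.lastCases ?_ (fun j => ?_) j
      · rw [Fin.snoc_last]; exact ⟨_, _, rfl⟩
      · rw [Fin.snoc_castSucc]; exact hf j
    · rw [Fin.sum_univ_castSucc]
      simp only [Fin.snoc_castSucc, Fin.snoc_last]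
      rw [← hsum, pf2_expand]
      simp only [xiF]
      rw [Fin.sum_univ_castSucc (f := e),
        Fin.sum_univ_castSucc (f := fun i => AddMonoidAlgebra.single (e i) (1 : ZMod 2))]
      push_cast
      linear_combination -xadd_self
        (AddMonoidAlgebra.single (∑ i : Fin (m+1), e i.castSucc) (1 : ZMod 2))

end PfisterAux

/-- For a basis e₁, …, e_n (n ≥ 2) of V and e₀ = e₁ + ⋯ + e_n, the element
ξ_e = (n+1)·1 + Σ_{i=0}^n X^{e_i} lies in I²[V] and has 2-Pfister number exactly n − 1. -/
theorem pfNum_two_generic (V : Type*) [AddCommGroup V] [Module (ZMod 2) V]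
    (n : ℕ) (hn : 2 ≤ n) (e : Module.Basis (Fin n) (ZMod 2) V) :
    ((n + 1 : ℕ) : AddMonoidAlgebra (ZMod 2) V)
        + AddMonoidAlgebra.single (∑ i, e i) 1
        + ∑ i, AddMonoidAlgebra.single (e i) 1 ∈ (augIdeal V) ^ 2 ∧
    PfNum 2 (((n + 1 : ℕ) : AddMonoidAlgebra (ZMod 2) V)
        + AddMonoidAlgebra.single (∑ i, e i) 1
        + ∑ i, AddMonoidAlgebra.single (e i) 1) = n - 1 := by
  classical
  obtain ⟨m, rfl⟩ : ∃ m, n = m + 1 := ⟨n - 1, by omega⟩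
  obtain ⟨f, hf, hsum⟩ := xi_upper m ⇑e
  have hsum' : ((m + 1 + 1 : ℕ) : AddMonoidAlgebra (ZMod 2) V)
      + AddMonoidAlgebra.single (∑ i, e i) 1
      + ∑ i, AddMonoidAlgebra.single (e i) 1 = ∑ j, f j := hsum
  have haug : ∀ w : V, (1 + AddMonoidAlgebra.single w (1 : ZMod 2)) ∈ augIdeal V := by
    intro w
    have h1 : eps0 V (AddMonoidAlgebra.single w 1) = 1 := by
      simp [eps0, AddMonoidAlgebra.lift_single]
    have : eps0 V (1 + AddMonoidAlgebra.single w 1) = 0 := by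
      rw [map_add, map_one, h1]
      decide
    exact RingHom.mem_ker.mpr this
  constructor
  · rw [hsum']
    apply Ideal.sum_mem
    intro j _
    obtain ⟨u, v, huv⟩ := hf j
    rw [huv, pow_two]
    exact Ideal.mul_mem_mul (haug u) (haug v)
  · have hmem : (m + 1 - 1 : ℕ) ∈ {r | ∃ g : Fin r → AddMonoidAlgebra (ZMod 2) V,
        (∀ i, IsPfister 2 (g i)) ∧
          ((m + 1 + 1 : ℕ) : AddMonoidAlgebra (ZMod 2) V)
            + AddMonoidAlgebra.single (∑ i, e i) 1
            + ∑ i, AddMonoidAlgebra.single (e i) 1 = ∑ i, g i} := by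
      refine ⟨f, fun j => ?_, hsum'⟩
      obtain ⟨u, v, huv⟩ := hf j
      refine ⟨![u, v], ?_⟩
      rw [huv, Fin.prod_univ_two]
      simp
    refine le_antisymm (Nat.sInf_le hmem) (le_csInf ⟨_, hmem⟩ ?_)
    rintro r ⟨g, hg, hgsum⟩
    have hlow := xi_lower (m + 1) ⇑e e.linearIndependent Finset.univ g
      (fun i _ => by
        obtain ⟨v, hv⟩ := hg i
        exact ⟨v 0, v 1, by rw [hv, Fin.prod_univ_two]⟩)
      hgsum
    simpa using hlow
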